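/- Let H₀, H₁ be Hopf algebras over a field k with Hopf algebra morphisms d₀, d₁ : H₁ → H₀ and s₀ : H₀ → H₁ satisfying d₀ ∘ s₀ = d₁ ∘ s₀ = id. Let f(a) = Σ a' · s₀(d₀(S(a''))) and set A¹₀₀ = RKer(d₀) = {a ∈ H₁ : Σ a' ⊗ d₀(a'') = a ⊗ 1}. Then the restriction ∂₁ of d₁ to A¹₀₀ is a twisted Hopf algebra map: for every a ∈ A¹₀₀, Σ d₁(f(a')) · d₀(a'') ⊗ d₁(a''') = Σ (d₁(a))' ⊗ (d₁(a))'' in H₀ ⊗ H₀, where the left-hand side is Δ_{H₀} composed via the braided coproduct Δ_A(a) = Σ f(a') ⊗ a'' and the coaction φ(a) = Σ d₀(a') ⊗ a''. -/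

import Mathlib

open TensorProduct

/-- `RKer(Ω) = {v : Σ v' ⊗ Ω(v'') = v ⊗ 1}`. -/
def RKer (k : Type*) {I H : Type*} [CommSemiring k] [Semiring I] [Semiring H]
    [HopfAlgebra k I] [HopfAlgebra k H] (Ω : I →ₐc[k] H) : Set I :=
  {v : I |
    TensorProduct.map (LinearMap.id : I →ₗ[k] I) Ω.toLinearMap (Coalgebra.comul (R := k) v)
      = v ⊗ₜ[k] (1 : H)}

/-- The kernel generator map `f(a) = Σ a' · s(d(S(a'')))`. -/
noncomputable def fgen {k A B : Type*} [Field k] [Ring A] [Ring B]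
    [HopfAlgebra k A] [HopfAlgebra k B] (d : A →ₐc[k] B) (s : B →ₐc[k] A) : A →ₗ[k] A :=
  (LinearMap.mul' k A)
    ∘ₗ (TensorProduct.map LinearMap.id
          (s.toLinearMap ∘ₗ d.toLinearMap ∘ₗ HopfAlgebra.antipode (R := k)))
    ∘ₗ (Coalgebra.comul (R := k))

/-- the restriction `∂₁` of `d₁` to `A¹₀₀ = RKer(d₀)` is a twisted Hopf
algebra map: for every `a ∈ A¹₀₀`,
`Σ d₁(f(a')) · d₀(a'') ⊗ d₁(a''') = Δ(d₁(a))`. -/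
theorem twisted_hopf_map {k H0 H1 : Type*} [Field k] [Ring H0] [Ring H1]
    [HopfAlgebra k H0] [HopfAlgebra k H1]
    (d0 d1 : H1 →ₐc[k] H0) (s0 : H0 →ₐc[k] H1)
    (hd0s0 : ∀ a : H0, d0 (s0 a) = a) (hd1s0 : ∀ a : H0, d1 (s0 a) = a)
    (a : H1) (ha : a ∈ RKer k d0) :
    TensorProduct.map (LinearMap.mul' k H0) LinearMap.id
        (TensorProduct.map
          (TensorProduct.map (d1.toLinearMap ∘ₗ fgen d0 s0) d0.toLinearMap) d1.toLinearMap
          (TensorProduct.map (Coalgebra.comul (R := k)) LinearMap.id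
            (Coalgebra.comul (R := k) a)))
      = Coalgebra.comul (R := k) (d1 a) := by
  classical
  have hc1 : ⇑(d1.toLinearMap) = ⇑d1 := rfl
  have hc0 : ⇑(d0.toLinearMap) = ⇑d0 := rfl
  have hcs : ⇑(s0.toLinearMap) = ⇑s0 := rfl
  -- the key pointwise lemma : Σ d1(f(x₁)) * d0(x₂) = d1 x
  have L : ∀ x : H1,
      LinearMap.mul' k H0
        (TensorProduct.map (d1.toLinearMap ∘ₗ fgen d0 s0) d0.toLinearMap
          (Coalgebra.comul (R := k) x)) = d1 x := by
    intro x
    set p := Coalgebra.Repr.arbitrary k x with hp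
    set a1 : (i : H1 × H1) → Coalgebra.Repr k (p.left i) (H1 × H1) :=
      fun i => Coalgebra.Repr.arbitrary k (p.left i) with ha1
    set a2 : (i : H1 × H1) → Coalgebra.Repr k (p.right i) (H1 × H1) :=
      fun i => Coalgebra.Repr.arbitrary k (p.right i) with ha2
    have key := Coalgebra.sum_tmul_tmul_eq (R := k) p a1 a2
    set S1 : H1 →ₗ[k] H1 := HopfAlgebra.antipode (R := k) with hS1
    let M : H1 ⊗[k] (H1 ⊗[k] H1) →ₗ[k] H0 :=
      LinearMap.mul' k H0 ∘ₗ
        TensorProduct.map d1.toLinearMap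
          (d0.toLinearMap ∘ₗ LinearMap.mul' k H1 ∘ₗ LinearMap.rTensor H1 S1)
    have key2 := congrArg M key
    simp only [map_sum, M, LinearMap.comp_apply, TensorProduct.map_tmul,
      LinearMap.rTensor_tmul, LinearMap.mul'_apply, hc0, hc1] at key2
    -- compute the RHS of key2
    have hrhs : ∀ i ∈ p.index,
        ∑ j ∈ (a2 i).index,
          d1 (p.left i) * d0 (S1 ((a2 i).left j) * (a2 i).right j)
          = Coalgebra.counit (R := k) (p.right i) • d1 (p.left i) := by
      intro i _
      rw [← Finset.mul_sum, ← map_sum]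
      rw [show ∑ j ∈ (a2 i).index, S1 ((a2 i).left j) * (a2 i).right j
            = algebraMap k H1 (Coalgebra.counit (R := k) (p.right i)) from
          HopfAlgebra.sum_antipode_mul_eq_algebraMap_counit (a2 i)]
      rw [AlgHomClass.commutes, ← Algebra.commutes, ← Algebra.smul_def]
    rw [Finset.sum_congr rfl hrhs] at key2
    -- compute the goal's LHS into the LHS of key2
    rw [← p.eq]
    simp only [map_sum, TensorProduct.map_tmul, LinearMap.mul'_apply, LinearMap.comp_apply,
      hc0, hc1]
    have hfi : ∀ i ∈ p.index,
        d1 (fgen d0 s0 (p.left i)) * d0 (p.right i)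
          = ∑ j ∈ (a1 i).index,
              d1 ((a1 i).left j) * d0 (S1 ((a1 i).right j) * p.right i) := by
      intro i _
      rw [fgen, LinearMap.comp_apply, LinearMap.comp_apply, ← (a1 i).eq]
      simp only [map_sum, TensorProduct.map_tmul, LinearMap.mul'_apply, LinearMap.comp_apply,
        hc0, hc1, hcs, LinearMap.id_coe, id_eq, map_mul, hd1s0, Finset.sum_mul,
        mul_assoc, ← hS1]
    rw [Finset.sum_congr rfl hfi, key2]
    -- finish : Σ counit(p.right i) • d1 (p.left i) = d1 x
    have hfin := Coalgebra.sum_tmul_counit_eq (R := k) p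
    have := congrArg (TensorProduct.rid k H1) hfin
    simp only [map_sum, TensorProduct.rid_tmul, one_smul] at this
    calc ∑ i ∈ p.index, Coalgebra.counit (R := k) (p.right i) • d1 (p.left i)
        = d1 (∑ i ∈ p.index, Coalgebra.counit (R := k) (p.right i) • p.left i) := by
          simp [map_sum, map_smul]
      _ = d1 x := by rw [this]
  -- now the main computation
  set r := Coalgebra.Repr.arbitrary k a with hr
  rw [← r.eq]
  simp only [map_sum, TensorProduct.map_tmul, LinearMap.id_coe, id_eq, hc0, hc1]
  have : ∀ i ∈ r.index,
      (LinearMap.mul' k H0)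
          (TensorProduct.map (d1.toLinearMap ∘ₗ fgen d0 s0) d0.toLinearMap
            (Coalgebra.comul (R := k) (r.left i))) ⊗ₜ[k] d1 (r.right i)
        = d1 (r.left i) ⊗ₜ[k] d1 (r.right i) := fun i _ => by rw [L (r.left i)]
  rw [Finset.sum_congr rfl this]
  have := CoalgHomClass.map_comp_comul_apply (d1 : H1 →ₐc[k] H0) a
  rw [← this, ← r.eq]
  simp [TensorProduct.map_tmul]
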